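/- Let f : Fin n → ℝ be an injective function, let ℓ ≤ n/2, let G be a connected simple graph on vertex set Fin ℓ (regarded as the first ℓ elements of Fin n), and let S_1, …, S_k be a connected partition of Fin ℓ. Let E′ be the set of edges of G with endpoints in two different blocks S_i, let V′ be the number of vertices incident to at least one edge of E′, and let C_2 be the number of connected components with more than one vertex of the subgraph spanned by E′. Then, for a permutation σ of Fin n chosen uniformly at random, the probability q that S_1, …, S_k is a witness with respect to G and f ∘ σ satisfies q ≤ (n/2)^{−(V′ − C_2 − (k−1))} (with the right-hand side interpreted as a real power). -/

import Mathlib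

/-- `P` is a connected partition of the vertex set of `G` (blocks are the fibers of `P`). -/
def ConnPartition {V : Type*} (G : SimpleGraph V) {k : ℕ} (P : V → Fin k) : Prop :=
  Function.Surjective P ∧ ∀ i : Fin k, (SimpleGraph.induce (P ⁻¹' {i}) G).Connected

/-- The set of edges of `G` whose endpoints lie in two different blocks of `P`. -/
def crossSet {V : Type*} (G : SimpleGraph V) {k : ℕ} (P : V → Fin k) : Set (Sym2 V) :=
  {e | e ∈ G.edgeSet ∧ ¬ (e.map P).IsDiag}

/-- The connected partition `P` is a witness with respect to `G` and the embedding `g`. -/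
def IsWitness {V : Type*} (G : SimpleGraph V) (g : V → ℝ) {k : ℕ} (P : V → Fin k) : Prop :=
  ∃ F : Fin k → Fin k → ℝ, (∀ l, F l l = 0) ∧
    ((Nat.card (crossSet G P) : ℝ) ≤ (Nat.card G.edgeSet : ℝ) / 2) ∧
    (∀ a b, G.Adj a b → P a ≠ P b → g a - g b = F (P a) (P b)) ∧
    (∀ (u : V) (w : G.Walk u u),
      (w.darts.map (fun d => F (P d.fst) (P d.snd))).sum = 0)

/-- The subgraph spanned by the cross edges of `P`. -/
def spannedGraph {V : Type*} (G : SimpleGraph V) {k : ℕ} (P : V → Fin k) : SimpleGraph V :=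
  SimpleGraph.fromEdgeSet (crossSet G P)

/-- `V'`: the number of vertices incident to at least one cross edge. -/
noncomputable def Vprime {V : Type*} (G : SimpleGraph V) {k : ℕ} (P : V → Fin k) : ℕ :=
  Nat.card {v : V // ∃ e ∈ crossSet G P, v ∈ e}

/-- `C₂`: the number of connected components with more than one vertex of the subgraph
spanned by the cross edges. -/
noncomputable def C2count {V : Type*} (G : SimpleGraph V) {k : ℕ} (P : V → Fin k) : ℕ :=
  Nat.card {c : (spannedGraph G P).ConnectedComponent //
    ∃ v w : V, v ≠ w ∧ (spannedGraph G P).connectedComponentMk v = c ∧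
      (spannedGraph G P).connectedComponentMk w = c}

/- ## Auxiliary material -/

section Aux

lemma sep_lemma {X : Type*} [Fintype X] [DecidableEq X] (L : Submodule ℝ (X → ℝ)) :
    ∃ S : Finset X, S.card ≤ Module.finrank ℝ L ∧
      ∀ x ∈ L, (∀ v ∈ S, x v = 0) → x = 0 := by
  generalize hd : Module.finrank ℝ L = d
  induction d using Nat.strong_induction_on generalizing L with
  | _ d ih =>
    by_cases hL : L = ⊥
    · exact ⟨∅, by simp, fun x hx _ => by simpa [hL] using hx⟩
    · obtain ⟨x₀, hx₀L, hx₀⟩ := Submodule.exists_mem_ne_zero_of_ne_bot hL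
      obtain ⟨v₀, hv₀⟩ : ∃ v₀, x₀ v₀ ≠ 0 := by
        by_contra h
        push_neg at h
        exact hx₀ (funext h)
      set L' := L ⊓ LinearMap.ker (LinearMap.proj (R := ℝ) (φ := fun _ : X => ℝ) v₀) with hL'
      have hlt : L' < L := by
        refine lt_of_le_of_ne inf_le_left ?_
        intro h
        have : x₀ ∈ L' := h ▸ hx₀L
        exact hv₀ this.2
      have hrk : Module.finrank ℝ L' < d := hd ▸ Submodule.finrank_lt_finrank_of_lt hlt
      obtain ⟨S', hS'c, hS'⟩ := ih _ hrk L' rfl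
      refine ⟨insert v₀ S', ?_, ?_⟩
      · calc (insert v₀ S').card ≤ S'.card + 1 := Finset.card_insert_le _ _
          _ ≤ Module.finrank ℝ L' + 1 := by omega
          _ ≤ d := by omega
      · intro x hx hxz
        refine hS' x ⟨hx, ?_⟩ (fun v hv => hxz v (Finset.mem_insert_of_mem hv))
        simpa using hxz v₀ (Finset.mem_insert_self _ _)

variable {V : Type*} {k : ℕ}

lemma spanned_adj {G : SimpleGraph V} {P : V → Fin k} {a b : V}
    (h : (spannedGraph G P).Adj a b) : G.Adj a b ∧ P a ≠ P b := by
  rw [spannedGraph, SimpleGraph.fromEdgeSet_adj] at h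
  obtain ⟨⟨he, hd⟩, _⟩ := h
  rw [SimpleGraph.mem_edgeSet] at he
  refine ⟨he, fun hPab => hd ?_⟩
  rw [Sym2.map_pair_eq, Sym2.mk_isDiag_iff]
  exact hPab

lemma witness_potential [Nonempty V] {G : SimpleGraph V}
    (hG : G.Connected) {P : V → Fin k} (hP : ConnPartition G P) {g : V → ℝ}
    (h : IsWitness G g P) :
    ∃ φ : Fin k → ℝ, ∀ a b, (spannedGraph G P).Adj a b →
      g a + φ (P a) = g b + φ (P b) := by
  obtain ⟨F, hF0, -, hFedge, hFcyc⟩ := h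
  let sF : ∀ {a b : V}, G.Walk a b → ℝ :=
    fun {a b} w => (w.darts.map (fun d => F (P d.fst) (P d.snd))).sum
  have hsF : ∀ {a b : V} (w : G.Walk a b),
      sF w = (w.darts.map (fun d => F (P d.fst) (P d.snd))).sum := fun _ => rfl
  have hanti : ∀ a b, G.Adj a b → F (P b) (P a) = - F (P a) (P b) := by
    intro a b hab
    have := hFcyc a (SimpleGraph.Walk.cons hab (SimpleGraph.Walk.cons hab.symm SimpleGraph.Walk.nil))
    simp only [SimpleGraph.Walk.darts_cons, SimpleGraph.Walk.darts_nil, List.map_cons,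
      List.map_nil, List.sum_cons, List.sum_nil, add_zero] at this
    linarith
  have hrev : ∀ a b (w : G.Walk a b), sF w.reverse = - sF w := by
    intro a b w
    rw [hsF, hsF]
    rw [SimpleGraph.Walk.darts_reverse, List.map_reverse, List.sum_reverse, List.map_map]
    have hmc : (List.map ((fun d => F (P d.toProd.1) (P d.toProd.2)) ∘ SimpleGraph.Dart.symm)
        w.darts) = List.map (fun d => -(F (P d.toProd.1) (P d.toProd.2))) w.darts := by
      refine List.map_congr_left ?_
      intro d _
      exact hanti _ _ d.adj
    rw [hmc]
    induction w.darts with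
    | nil => simp
    | cons hd tl ihl => simp [ihl]; ring
  obtain ⟨v₀⟩ := ‹Nonempty V›
  let θ : V → ℝ := fun v => sF ((hG.preconnected v₀ v).some)
  have hstep : ∀ a b, G.Adj a b → θ b = θ a + F (P a) (P b) := by
    intro a b hab
    have hcyc := hFcyc v₀
      ((((hG.preconnected v₀ a).some.append (SimpleGraph.Walk.cons hab SimpleGraph.Walk.nil))).append
        ((hG.preconnected v₀ b).some.reverse))
    rw [← hsF] at hcyc
    have e1 : ∀ {x y z : V} (p : G.Walk x y) (q : G.Walk y z),
        sF (p.append q) = sF p + sF q := by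
      intro x y z p q
      rw [hsF, hsF, hsF, SimpleGraph.Walk.darts_append, List.map_append, List.sum_append]
    rw [e1, e1, hrev] at hcyc
    have e2 : sF (SimpleGraph.Walk.cons hab SimpleGraph.Walk.nil) = F (P a) (P b) := by
      rw [hsF]; simp
    rw [e2] at hcyc
    show sF ((hG.preconnected v₀ b).some) = sF ((hG.preconnected v₀ a).some) + F (P a) (P b)
    linarith
  have hblock : ∀ a b, P a = P b → θ a = θ b := by
    have key : ∀ (i : Fin k) (x y : ↥(P ⁻¹' {i}))
        (w : (SimpleGraph.induce (P ⁻¹' {i}) G).Walk x y), θ x.1 = θ y.1 := by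
      intro i x y w
      induction w with
      | nil => rfl
      | @cons x y z hxy p ih =>
        have hadj : G.Adj x.1 y.1 := hxy
        have hPxy : P x.1 = P y.1 := by
          have hx := x.2
          have hy := y.2
          simp only [Set.mem_preimage, Set.mem_singleton_iff] at hx hy
          rw [hx, hy]
        have := hstep x.1 y.1 hadj
        rw [hPxy, hF0, add_zero] at this
        rw [← ih]
        exact this.symm
    intro a b hab
    have ha : a ∈ P ⁻¹' {P b} := by simp [hab]
    have hb : b ∈ P ⁻¹' {P b} := by simp
    exact key (P b) ⟨a, ha⟩ ⟨b, hb⟩ ((hP.2 (P b)).preconnected ⟨a, ha⟩ ⟨b, hb⟩).some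
  refine ⟨fun i => θ ((hP.1 i).choose), ?_⟩
  have hθφ : ∀ v, θ ((hP.1 (P v)).choose) = θ v := by
    intro v
    exact hblock _ _ ((hP.1 (P v)).choose_spec)
  intro a b hab
  obtain ⟨hGab, hPab⟩ := spanned_adj hab
  have := hFedge a b hGab hPab
  have hθ := hstep a b hGab
  dsimp only
  rw [hθφ a, hθφ b]
  linarith

variable [Fintype V]

abbrev XsubT (G : SimpleGraph V) (P : V → Fin k) := {v : V // ∃ e ∈ crossSet G P, v ∈ e}

abbrev CsubT (G : SimpleGraph V) (P : V → Fin k) := {c : (spannedGraph G P).ConnectedComponent //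
    ∃ v w : V, v ≠ w ∧ (spannedGraph G P).connectedComponentMk v = c ∧
      (spannedGraph G P).connectedComponentMk w = c}

noncomputable instance (G : SimpleGraph V) (P : V → Fin k) : Fintype (XsubT G P) :=
  Fintype.ofFinite _
noncomputable instance (G : SimpleGraph V) (P : V → Fin k) : Fintype (CsubT G P) :=
  Fintype.ofFinite _

variable (G : SimpleGraph V) (P : V → Fin k)

omit [Fintype V] in
lemma exists_adj_of_mem_X {v : V} (h : ∃ e ∈ crossSet G P, v ∈ e) :
    ∃ w, (spannedGraph G P).Adj v w := by
  obtain ⟨e, he, hv⟩ := h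
  induction e with
  | _ a b =>
    have hne : a ≠ b := by
      intro hab
      exact he.2 (by simp [hab])
    rcases Sym2.mem_iff.mp hv with h1 | h2
    · subst h1
      exact ⟨b, by rw [spannedGraph, SimpleGraph.fromEdgeSet_adj]; exact ⟨he, hne⟩⟩
    · subst h2
      refine ⟨a, by
        rw [spannedGraph, SimpleGraph.fromEdgeSet_adj]
        refine ⟨?_, hne.symm⟩
        rwa [Sym2.eq_swap]⟩

noncomputable def compOf (v : XsubT G P) : CsubT G P :=
  ⟨(spannedGraph G P).connectedComponentMk v.1, by
    obtain ⟨w, hw⟩ := exists_adj_of_mem_X G P v.2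
    exact ⟨v.1, w, hw.ne, rfl, SimpleGraph.ConnectedComponent.eq.mpr hw.symm.reachable⟩⟩

noncomputable def Tmap : ((Fin k → ℝ) × (CsubT G P → ℝ)) →ₗ[ℝ] (XsubT G P → ℝ) where
  toFun p := fun v => p.2 (compOf G P v) - p.1 (P v.1)
  map_add' p q := by funext v; simp; ring
  map_smul' r p := by funext v; simp; ring

lemma finrank_range_Tmap (hk : 0 < k) :
    Module.finrank ℝ (LinearMap.range (Tmap G P)) + 1 ≤ k + Nat.card (CsubT G P) := by
  have hrn := LinearMap.finrank_range_add_finrank_ker (Tmap G P)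
  have hdom : Module.finrank ℝ ((Fin k → ℝ) × (CsubT G P → ℝ)) = k + Nat.card (CsubT G P) := by
    rw [Module.finrank_prod, Module.finrank_pi, Module.finrank_pi, Fintype.card_fin,
      Nat.card_eq_fintype_card]
  have hker : 0 < Module.finrank ℝ (LinearMap.ker (Tmap G P)) := by
    have hmem : ((fun _ => (1:ℝ)), (fun _ => (1:ℝ))) ∈ LinearMap.ker (Tmap G P) := by
      rw [LinearMap.mem_ker]
      funext v
      simp [Tmap]
    have hne : ((fun _ => (1:ℝ)), (fun _ => (1:ℝ))) ≠
        ((0 : (Fin k → ℝ) × (CsubT G P → ℝ))) := by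
      intro h
      have := congrArg (fun p => p.1 ⟨0, hk⟩) h
      simpa using this
    rw [Module.finrank_pos_iff]
    refine nontrivial_of_ne ⟨_, hmem⟩ 0 (fun h0 => hne ?_)
    simpa using congrArg Subtype.val h0
  omega

lemma witness_mem_range [Nonempty V] (hG : G.Connected) (hP : ConnPartition G P)
    {g : V → ℝ} (h : IsWitness G g P) :
    (fun v : XsubT G P => g v.1) ∈ LinearMap.range (Tmap G P) := by
  obtain ⟨φ, hφ⟩ := witness_potential hG hP h
  have hconst : ∀ (v w : V) (p : (spannedGraph G P).Walk v w),
      g v + φ (P v) = g w + φ (P w) := by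
    intro v w p
    induction p with
    | nil => rfl
    | cons hadj p ih => rw [← ih]; exact hφ _ _ hadj
  let c₀ : (spannedGraph G P).ConnectedComponent → ℝ :=
    SimpleGraph.ConnectedComponent.lift (fun v => g v + φ (P v))
      (fun v w p _ => hconst v w p)
  refine ⟨(φ, fun c => c₀ c.1), ?_⟩
  funext v
  show c₀ ((compOf G P v).1) - φ (P v.1) = g v.1
  have hc : c₀ ((spannedGraph G P).connectedComponentMk v.1) = g v.1 + φ (P v.1) := rfl
  have hcomp : (compOf G P v).1 = (spannedGraph G P).connectedComponentMk v.1 := rfl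
  rw [hcomp, hc]
  ring

/-- order iso of equal finsets enumerate identically -/
lemma oio_congr {α : Type*} [LinearOrder α] {A A' : Finset α} (h : A = A') {m : ℕ}
    (hA : A.card = m) (hA' : A'.card = m) (i : Fin m) :
    ((A.orderIsoOfFin hA) i : α) = ((A'.orderIsoOfFin hA') i : α) := by
  subst h
  rfl

lemma fact_ratio_ineq {n ℓ : ℕ} (hln : 2 * ℓ ≤ n) (hl : 1 ≤ ℓ) (d : ℕ) :
    ((n - ℓ).factorial : ℝ) * ((n : ℝ) / 2) ^ d ≤ ((n - ℓ + d).factorial : ℝ) := by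
  induction d with
  | zero => simp
  | succ d ih =>
    have hstep : ((n : ℝ) / 2) ≤ ((n - ℓ + d : ℕ) : ℝ) + 1 := by
      have : (n : ℝ) ≤ 2 * ((n - ℓ + d : ℕ) : ℝ) + 2 := by
        have h1 : (ℓ : ℝ) ≤ ((n - ℓ + d : ℕ) : ℝ) + 1 := by
          have : ℓ ≤ n - ℓ + d + 1 := by omega
          exact_mod_cast this
        have h2 : ((n : ℕ) : ℝ) = ((n - ℓ : ℕ) : ℝ) + (ℓ : ℝ) := by
          have : (n : ℕ) = (n - ℓ) + ℓ := by omega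
          exact_mod_cast this
        have h3 : ((n - ℓ : ℕ) : ℝ) ≤ ((n - ℓ + d : ℕ) : ℝ) := by
          have : (n - ℓ) ≤ n - ℓ + d := by omega
          exact_mod_cast this
        linarith
      linarith
    have hfs : ((n - ℓ + (d+1)).factorial : ℝ) =
        (((n - ℓ + d : ℕ) : ℝ) + 1) * ((n - ℓ + d).factorial : ℝ) := by
      have : (n - ℓ + (d+1)).factorial = (n - ℓ + d + 1) * (n - ℓ + d).factorial :=
        Nat.factorial_succ _
      rw [this]
      push_cast
      ring
    rw [hfs, pow_succ]
    have hfpos : (0:ℝ) < ((n - ℓ + d).factorial : ℝ) := by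
      exact_mod_cast Nat.factorial_pos _
    have hbase : (0:ℝ) ≤ (n : ℝ) / 2 := by positivity
    calc ((n - ℓ).factorial : ℝ) * (((n : ℝ) / 2) ^ d * ((n : ℝ)/2))
        = (((n - ℓ).factorial : ℝ) * ((n : ℝ) / 2) ^ d) * ((n : ℝ)/2) := by ring
      _ ≤ ((n - ℓ + d).factorial : ℝ) * (((n - ℓ + d : ℕ) : ℝ) + 1) := by
          apply mul_le_mul ih hstep hbase (le_of_lt hfpos)
      _ = (((n - ℓ + d : ℕ) : ℝ) + 1) * ((n - ℓ + d).factorial : ℝ) := by ring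

end Aux

theorem stmt5 {n ℓ k : ℕ} (hln : 2 * ℓ ≤ n)
    (f : Fin n → ℝ) (hf : Function.Injective f)
    (G : SimpleGraph (Fin ℓ)) (hG : G.Connected)
    (P : Fin ℓ → Fin k) (hP : ConnPartition G P) :
    ((Nat.card {σ : Equiv.Perm (Fin n) //
        IsWitness G (fun i : Fin ℓ => f (σ (Fin.castLE (by omega) i))) P}) : ℝ) /
      (Nat.card (Equiv.Perm (Fin n)) : ℝ) ≤
    ((n : ℝ) / 2) ^ (-((Vprime G P : ℤ) - (C2count G P : ℤ) - ((k : ℤ) - 1))) := by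
  classical
  have hVne : Nonempty (Fin ℓ) := hG.nonempty
  have hl : 1 ≤ ℓ := hVne.some.pos
  have hk : 0 < k := (P hVne.some).pos
  have hn2 : 2 ≤ n := by omega
  have hcast : ℓ ≤ n := by omega
  obtain ⟨S, hScard, hSsep⟩ := sep_lemma (LinearMap.range (Tmap G P))
  have hSbound : S.card + 1 ≤ k + C2count G P := by
    have h1 := finrank_range_Tmap G P hk
    have h2 : C2count G P = Nat.card (CsubT G P) := rfl
    omega
  set D : Finset (Fin ℓ) := (Finset.univ \ S).image Subtype.val with hD
  have hDcard : D.card = Fintype.card (XsubT G P) - S.card := by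
    rw [hD, Finset.card_image_of_injective _ Subtype.val_injective,
      Finset.card_sdiff_of_subset (Finset.subset_univ S), Finset.card_univ]
  have hS_notD : ∀ v : XsubT G P, v ∈ S → v.1 ∉ D := by
    intro v hv hvD
    obtain ⟨w, hw, hwv⟩ := Finset.mem_image.mp hvD
    have hwveq : w = v := Subtype.ext hwv
    subst hwveq
    exact (Finset.mem_sdiff.mp hw).2 hv
  -- determination
  have hdet : ∀ g g' : Fin ℓ → ℝ, IsWitness G g P → IsWitness G g' P →
      (∀ v : Fin ℓ, v ∉ D → g v = g' v) → g = g' := by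
    intro g g' hg hg' hagree
    have hx := witness_mem_range G P hG hP hg
    have hx' := witness_mem_range G P hG hP hg'
    have hdiff := Submodule.sub_mem _ hx hx'
    have hzero : (fun v : XsubT G P => g v.1) - (fun v : XsubT G P => g' v.1) = 0 := by
      refine hSsep _ hdiff ?_
      intro v hv
      have := hagree v.1 (hS_notD v hv)
      simp [this]
    funext v
    by_cases hv : v ∈ D
    · obtain ⟨w, _, hwv⟩ := Finset.mem_image.mp hv
      have h0 := congrFun hzero w
      rw [Pi.sub_apply, Pi.zero_apply, sub_eq_zero] at h0
      rw [← hwv]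
      exact h0
    · exact hagree v hv
  have hdetσ : ∀ σ σ' : Equiv.Perm (Fin n),
      IsWitness G (fun i : Fin ℓ => f (σ (Fin.castLE hcast i))) P →
      IsWitness G (fun i : Fin ℓ => f (σ' (Fin.castLE hcast i))) P →
      (∀ v : Fin ℓ, v ∉ D → σ (Fin.castLE hcast v) = σ' (Fin.castLE hcast v)) →
      ∀ v : Fin ℓ, σ (Fin.castLE hcast v) = σ' (Fin.castLE hcast v) := by
    intro σ σ' h1 h2 hagree v
    have heq := hdet _ _ h1 h2 (fun v hv => by rw [hagree v hv])
    exact hf (congrFun heq v)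
  -- the injection
  let eT : Fin (n - ℓ) → Fin n := fun j => ⟨ℓ + j.1, by omega⟩
  let A : Equiv.Perm (Fin n) → Finset (Fin n) :=
    fun σ => (Finset.univ.image (fun v : Fin ℓ => σ (Fin.castLE hcast v)))ᶜ
  have hiinj : ∀ σ : Equiv.Perm (Fin n),
      Function.Injective (fun v : Fin ℓ => σ (Fin.castLE hcast v)) :=
    fun σ a b hab => Fin.castLE_injective hcast (σ.injective hab)
  have hAcard : ∀ σ, (A σ).card = n - ℓ := by
    intro σ
    rw [Finset.card_compl, Finset.card_image_of_injective _ (hiinj σ),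
      Finset.card_univ, Fintype.card_fin, Fintype.card_fin]
  have hAmem : ∀ (σ : Equiv.Perm (Fin n)) (j : Fin (n - ℓ)), σ (eT j) ∈ A σ := by
    intro σ j
    rw [Finset.mem_compl]
    intro hmem
    obtain ⟨v, -, hv⟩ := Finset.mem_image.mp hmem
    have hve : (Fin.castLE hcast v) = eT j := σ.injective hv
    have hv1 : v.1 = ℓ + j.1 := congrArg Fin.val hve
    have := v.2
    omega
  let WT := {σ : Equiv.Perm (Fin n) //
    IsWitness G (fun i : Fin ℓ => f (σ (Fin.castLE hcast i))) P}
  let Φ : WT → ({v : Fin ℓ // v ∉ D} ↪ Fin n) × (Fin (n - ℓ) ↪ Fin (n - ℓ)) :=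
    fun σp => (⟨fun v => σp.1 (Fin.castLE hcast v.1), by
        intro a b hab
        exact Subtype.ext (hiinj σp.1 hab)⟩,
      ⟨fun j => ((A σp.1).orderIsoOfFin (hAcard σp.1)).symm ⟨σp.1 (eT j), hAmem _ j⟩, by
        intro a b hab
        have := congrArg ((A σp.1).orderIsoOfFin (hAcard σp.1)) hab
        simp only [OrderIso.apply_symm_apply] at this
        have hv : σp.1 (eT a) = σp.1 (eT b) := congrArg Subtype.val this
        have := σp.1.injective hv
        have h1 : ℓ + a.1 = ℓ + b.1 := congrArg Fin.val this
        exact Fin.ext (by omega)⟩)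
  have hΦinj : Function.Injective Φ := by
    rintro ⟨σ, hσ⟩ ⟨σ', hσ'⟩ hEq
    have h1 : ∀ v : {v : Fin ℓ // v ∉ D}, σ (Fin.castLE hcast v.1) = σ' (Fin.castLE hcast v.1) :=
      fun v => DFunLike.congr_fun (congrArg Prod.fst hEq) v
    have hall : ∀ v : Fin ℓ, σ (Fin.castLE hcast v) = σ' (Fin.castLE hcast v) :=
      hdetσ σ σ' hσ hσ' (fun v hv => h1 ⟨v, hv⟩)
    have hAeq : A σ = A σ' := by
      show (Finset.univ.image (fun v : Fin ℓ => σ (Fin.castLE hcast v)))ᶜ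
        = (Finset.univ.image (fun v : Fin ℓ => σ' (Fin.castLE hcast v)))ᶜ
      rw [funext hall]
    have htail : ∀ j : Fin (n - ℓ), σ (eT j) = σ' (eT j) := by
      intro j
      have h2j := DFunLike.congr_fun (congrArg Prod.snd hEq) j
      simp only [Φ, Function.Embedding.coeFn_mk] at h2j
      change ((A σ).orderIsoOfFin (hAcard σ)).symm ⟨σ (eT j), hAmem σ j⟩ =
        ((A σ').orderIsoOfFin (hAcard σ')).symm ⟨σ' (eT j), hAmem σ' j⟩ at h2j
      have e1 : σ (eT j) = (((A σ).orderIsoOfFin (hAcard σ))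
          (((A σ).orderIsoOfFin (hAcard σ)).symm ⟨σ (eT j), hAmem σ j⟩) : Fin n) := by
        rw [OrderIso.apply_symm_apply]
      have e2 : σ' (eT j) = (((A σ').orderIsoOfFin (hAcard σ'))
          (((A σ').orderIsoOfFin (hAcard σ')).symm ⟨σ' (eT j), hAmem σ' j⟩) : Fin n) := by
        rw [OrderIso.apply_symm_apply]
      rw [e1, e2, ← h2j]
      exact oio_congr hAeq (hAcard σ) (hAcard σ') _
    refine Subtype.ext (Equiv.ext ?_)
    intro x
    by_cases hx : x.1 < ℓ
    · have : x = Fin.castLE hcast ⟨x.1, hx⟩ := Fin.ext rfl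
      rw [this]
      exact hall _
    · have : x = eT ⟨x.1 - ℓ, by omega⟩ := Fin.ext (by simp [eT]; omega)
      rw [this]
      exact htail _
  -- cardinalities
  have hDl : D.card ≤ ℓ := by
    have := Finset.card_le_card (Finset.subset_univ D)
    rwa [Finset.card_univ, Fintype.card_fin] at this
  have hDcCard : Fintype.card {v : Fin ℓ // v ∉ D} = ℓ - D.card := by
    rw [Fintype.card_subtype_compl, Fintype.card_fin]
    congr 1
    simp [Fintype.card_subtype]
  have hcount : Nat.card WT ≤ n.descFactorial (ℓ - D.card) * (n - ℓ).factorial := by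
    have h1 := Nat.card_le_card_of_injective Φ hΦinj
    have h2 : Nat.card (({v : Fin ℓ // v ∉ D} ↪ Fin n) × (Fin (n - ℓ) ↪ Fin (n - ℓ)))
        = n.descFactorial (ℓ - D.card) * (n - ℓ).factorial := by
      rw [Nat.card_eq_fintype_card, Fintype.card_prod, Fintype.card_embedding_eq,
        Fintype.card_embedding_eq, hDcCard, Fintype.card_fin, Fintype.card_fin,
        Nat.descFactorial_self]
    rw [← h2]
    exact h1
  have hperm : Nat.card (Equiv.Perm (Fin n)) = n.factorial := by
    rw [Nat.card_eq_fintype_card, Fintype.card_perm, Fintype.card_fin]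
  have hfactsplit : n.factorial = (n - ℓ + D.card).factorial * n.descFactorial (ℓ - D.card) := by
    have h1 : ℓ - D.card ≤ n := by omega
    have h2 : n - (ℓ - D.card) = n - ℓ + D.card := by omega
    rw [← Nat.factorial_mul_descFactorial h1, h2]
  -- base positivity
  have hbase1 : (1:ℝ) ≤ (n:ℝ)/2 := by
    rw [le_div_iff₀ (by norm_num : (0:ℝ) < 2)]
    have : (2:ℝ) ≤ (n:ℝ) := by exact_mod_cast hn2
    linarith
  have hbase0 : (0:ℝ) < (n:ℝ)/2 := lt_of_lt_of_le one_pos hbase1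
  have hLHS1 : ((Nat.card WT : ℝ)) / (Nat.card (Equiv.Perm (Fin n)) : ℝ) ≤
      ((n - ℓ).factorial : ℝ) / ((n - ℓ + D.card).factorial : ℝ) := by
    rw [hperm]
    have hnat : Nat.card WT * (n - ℓ + D.card).factorial ≤ (n - ℓ).factorial * n.factorial := by
      calc Nat.card WT * (n - ℓ + D.card).factorial
          ≤ (n.descFactorial (ℓ - D.card) * (n - ℓ).factorial) * (n - ℓ + D.card).factorial :=
            Nat.mul_le_mul_right _ hcount
        _ = (n - ℓ).factorial * ((n - ℓ + D.card).factorial * n.descFactorial (ℓ - D.card)) := by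
            ring
        _ = (n - ℓ).factorial * n.factorial := by rw [← hfactsplit]
    rw [div_le_div_iff₀ (by exact_mod_cast Nat.factorial_pos n)
      (by exact_mod_cast Nat.factorial_pos (n - ℓ + D.card))]
    exact_mod_cast hnat
  have hLHS2 : ((n - ℓ).factorial : ℝ) / ((n - ℓ + D.card).factorial : ℝ) ≤
      (((n:ℝ)/2) ^ D.card)⁻¹ := by
    rw [inv_eq_one_div, div_le_div_iff₀
      (by exact_mod_cast Nat.factorial_pos (n - ℓ + D.card)) (by positivity)]
    have := fact_ratio_ineq hln hl D.card
    linarith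
  -- case split on the exponent
  set M : ℤ := (Vprime G P : ℤ) - (C2count G P : ℤ) - ((k : ℤ) - 1) with hM
  have hVX : Vprime G P = Fintype.card (XsubT G P) := Nat.card_eq_fintype_card
  have hScX : S.card ≤ Fintype.card (XsubT G P) := by
    have := Finset.card_le_card (Finset.subset_univ S)
    rwa [Finset.card_univ] at this
  have hLHS01 : ((Nat.card WT : ℝ)) / (Nat.card (Equiv.Perm (Fin n)) : ℝ) ≤ 1 := by
    apply div_le_one_of_le₀
    · exact_mod_cast Nat.card_le_card_of_injective (Subtype.val) Subtype.val_injective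
    · positivity
  by_cases hMsign : 0 ≤ M
  · -- nontrivial case? no: M ≥ 0; handle both via toNat when ≥ 0; if M < 0 separate
    have htd : M.toNat ≤ D.card := by
      have h1 : (M.toNat : ℤ) = M := Int.toNat_of_nonneg hMsign
      omega
    have hzp : ((n:ℝ)/2) ^ (-M) = (((n:ℝ)/2) ^ (M.toNat))⁻¹ := by
      rw [zpow_neg]
      congr 1
      rw [← zpow_natCast]
      congr 1
      exact (Int.toNat_of_nonneg hMsign).symm
    rw [hzp]
    have hmono : (((n:ℝ)/2) ^ D.card)⁻¹ ≤ (((n:ℝ)/2) ^ M.toNat)⁻¹ := by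
      apply inv_anti₀ (by positivity)
      exact pow_le_pow_right₀ hbase1 htd
    exact le_trans hLHS1 (le_trans hLHS2 hmono)
  · push_neg at hMsign
    have hzp : (1:ℝ) ≤ ((n:ℝ)/2) ^ (-M) := by
      have h0 : (0:ℤ) ≤ -M := by omega
      have h1 : ((-M).toNat : ℤ) = -M := Int.toNat_of_nonneg h0
      rw [← h1, zpow_natCast]
      exact one_le_pow₀ hbase1
    exact le_trans hLHS01 hzp
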